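/- There is no strongly regular graph with parameters (19, 6, 1, 2); that is, no simple graph on 19 vertices exists that is 6-regular, in which every pair of adjacent vertices has exactly 1 common neighbor and every pair of non-adjacent vertices has exactly 2 common neighbors. -/

import Mathlib

open Matrix Finset

/-- There is no strongly regular graph with parameters (19, 6, 1, 2). -/
theorem no_srg_19_6_1_2 :
    ∀ (V : Type) [Fintype V] (G : SimpleGraph V) [DecidableRel G.Adj],
      ¬ G.IsSRGWith 19 6 1 2 := by
  intro V _ G _ h
  classical
  -- Step 1: the adjacency matrix identity (A - 6)(A² + A - 4) = 0
  set A : Matrix V V ℝ := G.adjMatrix ℝ with hAdef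
  set J : Matrix V V ℝ := Matrix.of (fun _ _ => (1:ℝ)) with hJdef
  have hAJ : A * J = (6:ℝ) • J := by
    ext i j
    simp [hJdef, hAdef, h.regular i]
  have hsum : (1 : Matrix V V ℝ) + A + Gᶜ.adjMatrix ℝ = J := by
    ext i j
    by_cases hij : i = j
    · subst hij; simp [hJdef, hAdef]
    · simp only [hJdef, hAdef, Matrix.add_apply, Matrix.one_apply_ne hij,
        SimpleGraph.adjMatrix_apply, SimpleGraph.compl_adj, Matrix.of_apply, ne_eq, hij,
        not_false_eq_true, true_and]
      by_cases hadj : G.Adj i j <;> simp [hadj]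
  have hsq : A * A = (6:ℝ) • 1 + A + (2:ℝ) • Gᶜ.adjMatrix ℝ := by
    have hm := h.matrix_eq (α := ℝ)
    rw [pow_two] at hm
    rw [hm]
    simp only [← Nat.cast_smul_eq_nsmul ℝ]
    norm_num
    exact hAdef.symm
  have hNJ : A * A + A - (4:ℝ) • 1 = (2:ℝ) • J := by
    rw [hsq, ← hsum]
    module
  have hkey : (A - (6:ℝ) • 1) * (A * A + A - (4:ℝ) • 1) = 0 := by
    rw [hNJ, Matrix.mul_smul, Matrix.sub_mul, hAJ, Matrix.smul_mul, Matrix.one_mul, sub_self,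
      smul_zero]
  -- Step 2: diagonalize via the spectral theorem
  have hA : A.IsHermitian := by
    rw [Matrix.IsHermitian, Matrix.conjTranspose_eq_transpose_of_trivial, hAdef]
    exact G.transpose_adjMatrix
  set U : Matrix V V ℝ := (Matrix.IsHermitian.eigenvectorUnitary hA : Matrix V V ℝ) with hUdef
  have hU1 : U * star U = 1 :=
    (Matrix.mem_unitaryGroup_iff).mp (Matrix.IsHermitian.eigenvectorUnitary hA).2
  have hU2 : star U * U = 1 :=
    (Matrix.mem_unitaryGroup_iff').mp (Matrix.IsHermitian.eigenvectorUnitary hA).2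
  set e : V → ℝ := hA.eigenvalues with hedef
  set D : Matrix V V ℝ := Matrix.diagonal e with hDdef
  have hD : star U * A * U = D := by
    have := hA.conjStarAlgAut_star_eigenvectorUnitary
    rw [Unitary.conjStarAlgAut_star_apply] at this
    simpa [RCLike.ofReal_real_eq_id, Function.id_comp, hUdef, hDdef, hedef] using this
  have hconj : ∀ X Y : Matrix V V ℝ, (star U * X * U) * (star U * Y * U) = star U * (X * Y) * U := by
    intro X Y
    calc (star U * X * U) * (star U * Y * U)
        = star U * X * (U * star U) * Y * U := by simp only [Matrix.mul_assoc]
      _ = star U * (X * Y) * U := by rw [hU1]; simp only [Matrix.mul_one, Matrix.mul_assoc]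
  have hD2 : star U * (A * A) * U = D * D := by rw [← hconj, hD]
  have h1 : star U * (A - (6:ℝ) • 1) * U = D - (6:ℝ) • 1 := by
    simp only [Matrix.mul_sub, Matrix.sub_mul, Matrix.mul_smul, Matrix.smul_mul, Matrix.mul_one,
      hU2, hD]
  have h2 : star U * (A * A + A - (4:ℝ) • 1) * U = D * D + D - (4:ℝ) • 1 := by
    simp only [Matrix.mul_sub, Matrix.sub_mul, Matrix.mul_add, Matrix.add_mul, Matrix.mul_smul,
      Matrix.smul_mul, Matrix.mul_one, hU2, hD, hD2]
  have hDkey : (D - (6:ℝ) • 1) * (D * D + D - (4:ℝ) • 1) = 0 := by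
    rw [← h1, ← h2, hconj, hkey, Matrix.mul_zero, Matrix.zero_mul]
  -- each eigenvalue satisfies (x - 6)(x² + x - 4) = 0
  have hdiag : ∀ i, (e i - 6) * (e i * e i + e i - 4) = 0 := by
    intro i
    have e1 : D - (6:ℝ) • 1 = Matrix.diagonal (fun i => e i - 6) := by
      ext a b
      by_cases hab : a = b <;> simp [hDdef, Matrix.diagonal_apply, Matrix.one_apply, hab]
    have e2 : D * D + D - (4:ℝ) • 1 = Matrix.diagonal (fun i => e i * e i + e i - 4) := by
      rw [hDdef, Matrix.diagonal_mul_diagonal]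
      ext a b
      by_cases hab : a = b <;> simp [hDdef, Matrix.diagonal_apply, Matrix.one_apply, hab]
    have h0 := Matrix.ext_iff.mpr hDkey i i
    rw [e1, e2, Matrix.diagonal_mul_diagonal] at h0
    simpa using h0
  -- trace identities
  have htrD : ∑ i, e i = 0 := by
    have : (star U * A * U).trace = A.trace := by
      rw [Matrix.trace_mul_cycle, hU1, Matrix.one_mul]
    rw [hD, hDdef, Matrix.trace_diagonal] at this
    rw [this, hAdef, SimpleGraph.trace_adjMatrix]
  have htrD2 : ∑ i, e i * e i = 114 := by
    have t1 : (star U * (A * A) * U).trace = (A * A).trace := by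
      rw [Matrix.trace_mul_cycle, hU1, Matrix.one_mul]
    rw [hD2, hDdef, Matrix.diagonal_mul_diagonal, Matrix.trace_diagonal] at t1
    have t2 : (A * A).trace = 114 := by
      have hv : ∀ i, (A * A) i i = 6 := by
        intro i
        rw [hAdef, SimpleGraph.adjMatrix_mul_self_apply_self]
        exact_mod_cast congrArg Nat.cast (h.regular i)
      rw [Matrix.trace]
      simp only [Matrix.diag, hv]
      rw [Finset.sum_const, Finset.card_univ, h.card]
      norm_num
    rw [t1, t2]
  -- Step 3: count eigenvalue multiplicities and derive a contradiction
  set t : ℝ := Real.sqrt 17 with htdef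
  have ht : t * t = 17 := Real.mul_self_sqrt (by norm_num)
  set r : ℝ := (-1 + t)/2 with hrdef
  set s : ℝ := (-1 - t)/2 with hsdef
  have htri : ∀ i, e i = 6 ∨ e i = r ∨ e i = s := by
    intro i
    have hfac : (e i - 6) * ((e i - r) * (e i - s)) = 0 := by
      rw [hrdef, hsdef]
      linear_combination (hdiag i) + (e i - 6) * (-(1:ℝ)/4) * ht
    rcases mul_eq_zero.mp hfac with h6 | hrs
    · exact Or.inl (by linarith)
    · rcases mul_eq_zero.mp hrs with ha | hb
      · exact Or.inr (Or.inl (by linarith))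
      · exact Or.inr (Or.inr (by linarith))
  set a := (univ.filter (fun i => e i = 6)).card with hadef
  set b := (univ.filter (fun i => ¬e i = 6 ∧ e i = r)).card with hbdef
  set c := (univ.filter (fun i => ¬e i = 6 ∧ ¬e i = r)).card with hcdef
  have key : ∀ (f : V → ℝ) (x6 xr xs : ℝ),
      (∀ i, e i = 6 → f i = x6) → (∀ i, ¬ e i = 6 → e i = r → f i = xr) →
      (∀ i, ¬ e i = 6 → ¬ e i = r → f i = xs) →
      ∑ i, f i = a * x6 + b * xr + c * xs := by
    intro f x6 xr xs h6 hr hs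
    rw [← Finset.sum_filter_add_sum_filter_not Finset.univ (fun i => e i = 6) f,
      ← Finset.sum_filter_add_sum_filter_not (Finset.univ.filter (fun i => ¬ e i = 6))
        (fun i => e i = r) f, Finset.filter_filter, Finset.filter_filter]
    rw [Finset.sum_congr rfl (fun i hi => h6 i (Finset.mem_filter.mp hi).2),
      Finset.sum_congr rfl (fun i hi =>
        hr i (Finset.mem_filter.mp hi).2.1 (Finset.mem_filter.mp hi).2.2),
      Finset.sum_congr rfl (fun i hi =>
        hs i (Finset.mem_filter.mp hi).2.1 (Finset.mem_filter.mp hi).2.2),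
      Finset.sum_const, Finset.sum_const, Finset.sum_const]
    rw [← hadef, ← hbdef, ← hcdef]
    simp [nsmul_eq_mul]
    ring
  have E3 : (a:ℝ) + b + c = 19 := by
    have := key (fun _ => (1:ℝ)) 1 1 1 (fun _ _ => rfl) (fun _ _ _ => rfl) (fun _ _ _ => rfl)
    simp at this
    rw [h.card] at this
    push_cast at this ⊢
    linarith
  have E1 : (a:ℝ) * 6 + b * r + c * s = 0 := by
    rw [← key e 6 r s (fun i hi => hi) (fun i _ hi => hi)
      (fun i h1 h2 => ((htri i).resolve_left h1).resolve_left h2)]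
    exact htrD
  have E2 : (a:ℝ) * 36 + b * (r*r) + c * (s*s) = 114 := by
    rw [← key (fun i => e i * e i) 36 (r*r) (s*s)
      (fun i hi => by simp only [hi]; norm_num)
      (fun i _ hi => by simp only [hi])
      (fun i h1 h2 => by simp only [((htri i).resolve_left h1).resolve_left h2])]
    exact htrD2
  have hbc1 : t * ((b:ℝ) - c) = 19 - 13*a := by
    rw [hrdef, hsdef] at E1
    linear_combination 2*E1 + E3
  have hbc2 : t * ((b:ℝ) - c) = 63*a - 57 := by
    rw [hrdef, hsdef] at E2
    linear_combination (-2)*E2 + 9*E3 + (((b:ℝ)+c)/2)*ht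
  have ha1 : (a:ℝ) = 1 := by linarith
  have hbc : t * ((b:ℝ) - c) = 6 := by rw [hbc1, ha1]; norm_num
  have hsq17 : (17:ℝ) * ((b:ℝ) - c)^2 = 36 := by
    nlinarith [ht, hbc]
  have hsqz : (17:ℤ) * ((b:ℤ) - c)^2 = 36 := by
    have : (17:ℝ) * (((b:ℤ) - (c:ℤ) : ℤ):ℝ)^2 = 36 := by push_cast; push_cast at hsq17; linarith
    exact_mod_cast this
  have hdvd : (17:ℤ) ∣ 36 := ⟨((b:ℤ) - c)^2, by linarith⟩
  norm_num at hdvd
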